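/- Define f₁(α) = (α/(1−α))^{1−α} · 2^{1/2−α} for α ∈ (0,1). Then there exists c₀ > 1/2 such that f₁ is strictly monotone increasing on (0, c₀). -/

import Mathlib

noncomputable def gAux : ℝ → ℝ :=
  fun α => (1 - α) * (Real.log α - Real.log (1 - α)) + ((1:ℝ)/2 - α) * Real.log 2

lemma gAux_hasDerivAt {x : ℝ} (hx0 : 0 < x) (hx1 : x < 1) :
    HasDerivAt gAux (-Real.log x + Real.log (1 - x) + 1/x - Real.log 2) x := by
  have h1x : (0:ℝ) < 1 - x := by linarith
  have h1 : HasDerivAt (fun α : ℝ => 1 - α) (-1) x := by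
    simpa using (hasDerivAt_id x).const_sub 1
  have hlog1 : HasDerivAt Real.log x⁻¹ x := Real.hasDerivAt_log hx0.ne'
  have hlog2 : HasDerivAt (fun α : ℝ => Real.log (1 - α)) ((1 - x)⁻¹ * (-1)) x :=
    (Real.hasDerivAt_log h1x.ne').comp x h1
  have hsub : HasDerivAt (fun α : ℝ => Real.log α - Real.log (1 - α))
      (x⁻¹ - (1 - x)⁻¹ * (-1)) x := hlog1.sub hlog2
  have hmul := h1.mul hsub
  have hc : HasDerivAt (fun α : ℝ => ((1:ℝ)/2 - α) * Real.log 2)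
      (-1 * Real.log 2) x := by
    simpa using (((hasDerivAt_id x).const_sub ((1:ℝ)/2)).mul_const (Real.log 2))
  have htot := hmul.add hc
  have hx0' : x ≠ 0 := hx0.ne'
  have h1x' : 1 - x ≠ 0 := h1x.ne'
  refine htot.congr_deriv ?_
  rw [one_div]
  linear_combination mul_inv_cancel₀ h1x' - mul_inv_cancel₀ hx0'

lemma log_three_lt : Real.log 3 < 5/3 := by
  rw [Real.log_lt_iff_lt_exp (by norm_num)]
  have h := Real.add_one_le_exp ((5:ℝ)/6)
  have h2 : Real.exp ((5:ℝ)/3) = Real.exp ((5:ℝ)/6) * Real.exp ((5:ℝ)/6) := by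
    rw [← Real.exp_add]; norm_num
  nlinarith [Real.exp_pos ((5:ℝ)/6)]

theorem stmt8 :
    ∃ c₀ : ℝ, 1/2 < c₀ ∧
      StrictMonoOn (fun α : ℝ => (α / (1 - α)) ^ (1 - α) * (2:ℝ) ^ ((1:ℝ)/2 - α))
        (Set.Ioo (0:ℝ) c₀) := by
  refine ⟨3/5, by norm_num, ?_⟩
  have hg : StrictMonoOn gAux (Set.Ioo (0:ℝ) (3/5)) := by
    apply strictMonoOn_of_deriv_pos (convex_Ioo _ _)
    · intro x hx
      obtain ⟨hx0, hx1⟩ := hx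
      exact ((gAux_hasDerivAt hx0 (by linarith)).differentiableAt).continuousAt.continuousWithinAt
    · intro x hx
      rw [interior_Ioo] at hx
      obtain ⟨hx0, hx1⟩ := hx
      have hx1' : x < 1 := by linarith
      have h1x : (0:ℝ) < 1 - x := by linarith
      rw [(gAux_hasDerivAt hx0 hx1').deriv]
      -- log(1-x) - log x > log(2/3)
      have hdiv : (2:ℝ)/3 < (1 - x)/x := by
        rw [lt_div_iff₀ hx0]; linarith
      have hlt : Real.log ((2:ℝ)/3) < Real.log ((1 - x)/x) :=
        Real.log_lt_log (by norm_num) hdiv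
      rw [Real.log_div h1x.ne' hx0.ne'] at hlt
      rw [Real.log_div (by norm_num) (by norm_num)] at hlt
      have hinv : (5:ℝ)/3 < 1/x := by
        rw [lt_div_iff₀ hx0]; linarith
      have h3 := log_three_lt
      linarith
  intro a ha b hb hab
  have key : ∀ x ∈ Set.Ioo (0:ℝ) (3/5),
      (x / (1 - x)) ^ (1 - x) * (2:ℝ) ^ ((1:ℝ)/2 - x) = Real.exp (gAux x) := by
    intro x hx
    obtain ⟨hx0, hx1⟩ := hx
    have h1x : (0:ℝ) < 1 - x := by linarith
    rw [Real.rpow_def_of_pos (div_pos hx0 h1x), Real.rpow_def_of_pos (by norm_num : (0:ℝ) < 2),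
      ← Real.exp_add, Real.log_div hx0.ne' h1x.ne']
    unfold gAux
    ring_nf
  simp only
  rw [key a ha, key b hb]
  exact Real.exp_lt_exp.2 (hg ha hb hab)
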